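/- Let a, b > 0 and let A, B be independent random variables with A ~ Poisson(a), B ~ Poisson(b). Then for every integer n ≥ 0, the conditional distribution of A given A + B = n is Binomial(n, a/(a+b)). Consequently, in the Capture–Recapture model with S_Y = Σ_{m=1}^M Y_m and S₂ = Σ_{m=1}^M X_{m,2}, for every n ≥ 1 one has E[S_Y/(S_Y + S₂) | S_Y + S₂ = n] = p₁, and hence E[p̂_{1,CR} | S_Y + S₂ ≥ 1] = p₁; symmetrically E[p̂_{2,CR} | S_Y + S₁ ≥ 1] = p₂ where S₁ = Σ_{m=1}^M X_{m,1}. -/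

import Mathlib

open MeasureTheory ProbabilityTheory Finset
open Real

noncomputable def pmass (u : ℝ) (k : ℕ) : ℝ := Real.exp (-u) * u ^ k / (Nat.factorial k)

lemma pmass_nonneg {u : ℝ} (hu : 0 ≤ u) (k : ℕ) : 0 ≤ pmass u k := by
  unfold pmass; positivity

lemma pmass_pos {u : ℝ} (hu : 0 < u) (k : ℕ) : 0 < pmass u k := by
  unfold pmass; positivity

lemma map_poisson_mass {Ω : Type*} [MeasurableSpace Ω] {μ : Measure Ω} {T : Ω → ℕ}
    (hmT : Measurable T) {r : ℝ} (hr : 0 ≤ r)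
    (hT : μ.map T = poissonMeasure r.toNNReal) (k : ℕ) :
    μ {ω | T ω = k} = ENNReal.ofReal (pmass r k) := by
  have h1 : μ {ω | T ω = k} = μ.map T {k} := by
    rw [Measure.map_apply hmT (measurableSet_singleton k)]; rfl
  rw [h1, hT, poissonMeasure_singleton]
  congr 1
  unfold pmass
  rw [Real.coe_toNNReal r hr]

lemma pmass_conv (u v : ℝ) (n : ℕ) :
    ∑ k ∈ range (n+1), pmass u k * pmass v (n - k) = pmass (u+v) n := by
  have h : pmass (u+v) n
      = ∑ k ∈ range (n+1), Real.exp (-u) * Real.exp (-v) * (u^k * v^(n-k) * ((n.choose k : ℕ) : ℝ)) / (n.factorial : ℝ) := by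
    unfold pmass
    rw [show -(u+v) = -u + -v by ring, Real.exp_add, add_pow, Finset.mul_sum, Finset.sum_div]
  rw [h]
  refine Finset.sum_congr rfl fun k hk => ?_
  have hk' : k ≤ n := Nat.lt_succ_iff.mp (Finset.mem_range.mp hk)
  unfold pmass
  rw [Nat.cast_choose ℝ hk']
  have h1 : (Nat.factorial k : ℝ) ≠ 0 := Nat.cast_ne_zero.mpr (Nat.factorial_ne_zero k)
  have h2 : (Nat.factorial (n-k) : ℝ) ≠ 0 := Nat.cast_ne_zero.mpr (Nat.factorial_ne_zero _)
  have h3 : (Nat.factorial n : ℝ) ≠ 0 := Nat.cast_ne_zero.mpr (Nat.factorial_ne_zero n)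
  field_simp

lemma sum_mass {Ω : Type*} [MeasurableSpace Ω] {μ : Measure Ω} {U V : Ω → ℕ}
    (hmU : Measurable U) (hmV : Measurable V) (hUV : IndepFun U V μ)
    {u v : ℝ} (hu : 0 ≤ u) (hv : 0 ≤ v)
    (hU : ∀ k, μ {ω | U ω = k} = ENNReal.ofReal (pmass u k))
    (hV : ∀ k, μ {ω | V ω = k} = ENNReal.ofReal (pmass v k)) (n : ℕ) :
    μ {ω | U ω + V ω = n} = ENNReal.ofReal (pmass (u + v) n) := by
  have hset : {ω | U ω + V ω = n} = ⋃ k ∈ (range (n+1) : Finset ℕ), ({ω | U ω = k} ∩ {ω | V ω = n - k}) := by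
    ext ω
    simp only [Set.mem_setOf_eq, Set.mem_iUnion, Set.mem_inter_iff, Finset.mem_range]
    constructor
    · intro h
      exact ⟨U ω, by omega, rfl, by omega⟩
    · rintro ⟨k, hk, h1, h2⟩
      omega
  have hmeas : ∀ k : ℕ, MeasurableSet ({ω | U ω = k} ∩ {ω | V ω = n - k}) := by
    intro k
    exact (hmU (measurableSet_singleton k)).inter (hmV (measurableSet_singleton (n-k)))
  rw [hset, measure_biUnion_finset ?_ (fun k _ => hmeas k)]
  · have hterm : ∀ k ∈ range (n+1),
        μ ({ω | U ω = k} ∩ {ω | V ω = n - k}) = ENNReal.ofReal (pmass u k * pmass v (n-k)) := by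
      intro k _
      have := hUV.measure_inter_preimage_eq_mul {k} {n - k} (measurableSet_singleton _) (measurableSet_singleton _)
      have heq : U ⁻¹' {k} ∩ V ⁻¹' {n-k} = {ω | U ω = k} ∩ {ω | V ω = n - k} := rfl
      rw [heq] at this
      rw [this]
      have hU' : U ⁻¹' {k} = {ω | U ω = k} := rfl
      have hV' : V ⁻¹' {n-k} = {ω | V ω = n - k} := rfl
      rw [hU', hV', hU, hV, ← ENNReal.ofReal_mul (pmass_nonneg hu k)]
    rw [Finset.sum_congr rfl hterm, ← ENNReal.ofReal_sum_of_nonneg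
      (fun k _ => mul_nonneg (pmass_nonneg hu k) (pmass_nonneg hv _)), pmass_conv]
  · intro k _ l _ hkl
    simp only [Function.onFun, Set.disjoint_left]
    rintro ω ⟨h1, -⟩ ⟨h2, -⟩
    exact hkl (h1 ▸ h2 ▸ rfl)

lemma cond_binom {Ω : Type*} [MeasurableSpace Ω] {μ : Measure Ω} {U V : Ω → ℕ}
    (hmU : Measurable U) (hmV : Measurable V) (hUV : IndepFun U V μ)
    {u v : ℝ} (hu : 0 < u) (hv : 0 < v)
    (hU : ∀ k, μ {ω | U ω = k} = ENNReal.ofReal (pmass u k))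
    (hV : ∀ k, μ {ω | V ω = k} = ENNReal.ofReal (pmass v k))
    (n k : ℕ) (hk : k ≤ n) :
    μ[|{ω | U ω + V ω = n}] {ω | U ω = k} =
      ENNReal.ofReal ((n.choose k : ℝ) * (u/(u+v))^k * (1 - u/(u+v))^(n-k)) := by
  have hs : MeasurableSet {ω | U ω + V ω = n} := (hmU.add hmV) (measurableSet_singleton n)
  rw [ProbabilityTheory.cond_apply hs]
  have hinter : {ω | U ω + V ω = n} ∩ {ω | U ω = k} = {ω | U ω = k} ∩ {ω | V ω = n - k} := by
    ext ω; simp only [Set.mem_inter_iff, Set.mem_setOf_eq]; omega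
  have hjoint : μ ({ω | U ω = k} ∩ {ω | V ω = n - k})
      = ENNReal.ofReal (pmass u k * pmass v (n - k)) := by
    have := hUV.measure_inter_preimage_eq_mul {k} {n - k}
      (measurableSet_singleton _) (measurableSet_singleton _)
    rw [show U ⁻¹' {k} ∩ V ⁻¹' {n-k} = {ω | U ω = k} ∩ {ω | V ω = n - k} from rfl] at this
    rw [this, show U ⁻¹' {k} = {ω | U ω = k} from rfl,
      show V ⁻¹' {n-k} = {ω | V ω = n - k} from rfl, hU, hV,
      ← ENNReal.ofReal_mul (pmass_nonneg hu.le k)]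
  rw [hinter, hjoint, sum_mass hmU hmV hUV hu.le hv.le hU hV n]
  have hp : 0 < pmass (u+v) n := pmass_pos (by linarith) n
  rw [← ENNReal.ofReal_inv_of_pos hp, ← ENNReal.ofReal_mul (by positivity)]
  congr 1
  have huv : (0:ℝ) < u + v := by linarith
  have h1 : 1 - u/(u+v) = v/(u+v) := by field_simp; ring
  rw [h1]
  unfold pmass
  rw [Nat.cast_choose ℝ hk, show -(u+v) = -u + -v by ring, Real.exp_add,
      show (u+v)^n = (u+v)^k * (u+v)^(n-k) by rw [← pow_add]; congr 1; omega,
      div_pow, div_pow]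
  have h2 : (Nat.factorial k : ℝ) ≠ 0 := Nat.cast_ne_zero.mpr (Nat.factorial_ne_zero k)
  have h3 : (Nat.factorial (n-k) : ℝ) ≠ 0 := Nat.cast_ne_zero.mpr (Nat.factorial_ne_zero _)
  have h4 : (Nat.factorial n : ℝ) ≠ 0 := Nat.cast_ne_zero.mpr (Nat.factorial_ne_zero n)
  have h5 : Real.exp (-u) ≠ 0 := Real.exp_ne_zero _
  have h6 : Real.exp (-v) ≠ 0 := Real.exp_ne_zero _
  have h7 : (u+v)^k ≠ 0 := by positivity
  have h8 : (u+v)^(n-k) ≠ 0 := by positivity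
  field_simp

lemma binom_mean (n : ℕ) (p q : ℝ) (hpq : p + q = 1) :
    ∑ k ∈ range (n+1), (k : ℝ) * (n.choose k : ℝ) * p^k * q^(n-k) = n * p := by
  cases n with
  | zero => simp
  | succ m =>
    rw [Finset.sum_range_succ']
    simp only [Nat.cast_zero, zero_mul]
    have key : ∀ j ∈ range (m+1),
        ((j+1 : ℕ) : ℝ) * ((m+1).choose (j+1) : ℝ) * p^(j+1) * q^(m+1-(j+1))
          = ((m+1 : ℕ) : ℝ) * p * ((m.choose j : ℝ) * p^j * q^(m-j)) := by
      intro j hj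
      have hc : (m+1) * m.choose j = (m+1).choose (j+1) * (j+1) := Nat.add_one_mul_choose_eq m j
      have hc' : ((m+1 : ℕ) : ℝ) * (m.choose j : ℝ) = ((m+1).choose (j+1) : ℝ) * ((j+1 : ℕ) : ℝ) := by
        exact_mod_cast congrArg (Nat.cast : ℕ → ℝ) hc
      have hsub : m + 1 - (j+1) = m - j := by omega
      rw [hsub, pow_succ]
      linear_combination (-(p ^ j * p * q ^ (m - j))) * hc'
    rw [Finset.sum_congr rfl key, ← Finset.mul_sum]
    have hbin : ∑ j ∈ range (m+1), (m.choose j : ℝ) * p^j * q^(m-j) = 1 := by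
      have h := add_pow p q m
      rw [hpq, one_pow] at h
      conv_rhs => rw [h]
      exact Finset.sum_congr rfl fun j hj => by ring
    rw [hbin]
    push_cast
    ring

lemma cond_exp_eq {Ω : Type*} [MeasurableSpace Ω] {μ : Measure Ω} [IsProbabilityMeasure μ]
    {U V : Ω → ℕ}
    (hmU : Measurable U) (hmV : Measurable V) (hUV : IndepFun U V μ)
    {u v : ℝ} (hu : 0 < u) (hv : 0 < v)
    (hU : ∀ k, μ {ω | U ω = k} = ENNReal.ofReal (pmass u k))
    (hV : ∀ k, μ {ω | V ω = k} = ENNReal.ofReal (pmass v k))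
    (n : ℕ) (hn : 1 ≤ n) :
    ∫ ω, (U ω : ℝ) / ((U ω + V ω : ℕ) : ℝ) ∂(μ[|{ω | U ω + V ω = n}]) = u / (u + v) := by
  set s : Set Ω := {ω | U ω + V ω = n} with hs_def
  have hs : MeasurableSet s := (hmU.add hmV) (measurableSet_singleton n)
  have hμs : μ s = ENNReal.ofReal (pmass (u+v) n) := sum_mass hmU hmV hUV hu.le hv.le hU hV n
  have hμs0 : μ s ≠ 0 := by
    rw [hμs]
    simp only [ne_eq, ENNReal.ofReal_eq_zero, not_le]
    exact pmass_pos (by linarith) n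
  haveI : IsProbabilityMeasure (μ[|s]) := cond_isProbabilityMeasure hμs0
  have hae : ∀ᵐ ω ∂(μ[|s]), U ω + V ω = n := by
    rw [ae_iff]
    have hcompl : {ω | ¬ U ω + V ω = n} = sᶜ := rfl
    rw [hcompl, ProbabilityTheory.cond_apply hs]
    simp
  have hcongr : ∫ ω, (U ω : ℝ) / ((U ω + V ω : ℕ) : ℝ) ∂(μ[|s])
      = ∫ ω, (∑ k ∈ range (n+1), Set.indicator {ω' | U ω' = k} (fun _ => (k:ℝ)/n) ω) ∂(μ[|s]) := by
    refine integral_congr_ae (hae.mono fun ω hω => ?_)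
    have hUle : U ω ≤ n := by omega
    show (U ω : ℝ) / ((U ω + V ω : ℕ) : ℝ)
        = ∑ k ∈ range (n+1), Set.indicator {ω' | U ω' = k} (fun _ => (k:ℝ)/n) ω
    rw [Finset.sum_eq_single_of_mem (U ω) (Finset.mem_range.mpr (by omega))]
    · rw [Set.indicator_of_mem (by exact rfl : ω ∈ {ω' | U ω' = U ω}), hω]
    · intro k _ hk
      exact Set.indicator_of_notMem (fun h => hk (h.symm)) _
  rw [hcongr, integral_finset_sum]
  · have hterm : ∀ k ∈ range (n+1),
        ∫ ω, Set.indicator {ω' | U ω' = k} (fun _ => (k:ℝ)/n) ω ∂(μ[|s])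
          = ((n.choose k : ℝ) * (u/(u+v))^k * (1 - u/(u+v))^(n-k)) * ((k:ℝ)/n) := by
      intro k hk
      have hmk : MeasurableSet {ω' | U ω' = k} := hmU (measurableSet_singleton k)
      rw [integral_indicator_const _ hmk, measureReal_def, cond_binom hmU hmV hUV hu hv hU hV n k
        (Nat.lt_succ_iff.mp (Finset.mem_range.mp hk))]
      rw [ENNReal.toReal_ofReal]
      · rw [smul_eq_mul]
      · have hple : u/(u+v) ≤ 1 := by
          rw [div_le_one (by linarith)]; linarith
        have : (0:ℝ) ≤ 1 - u/(u+v) := by linarith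
        positivity
    rw [Finset.sum_congr rfl hterm]
    have hpq : u/(u+v) + (1 - u/(u+v)) = 1 := by ring
    have hmean := binom_mean n (u/(u+v)) (1 - u/(u+v)) hpq
    have hrw : ∀ k ∈ range (n+1),
        ((n.choose k : ℝ) * (u/(u+v))^k * (1 - u/(u+v))^(n-k)) * ((k:ℝ)/n)
          = ((k : ℝ) * (n.choose k : ℝ) * (u/(u+v))^k * (1 - u/(u+v))^(n-k)) * (1/n) := by
      intro k _; ring
    rw [Finset.sum_congr rfl hrw, ← Finset.sum_mul, hmean]
    have hn0 : (n:ℝ) ≠ 0 := Nat.cast_ne_zero.mpr (by omega)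
    field_simp
  · intro k hk
    have hmk : MeasurableSet {ω' | U ω' = k} := hmU (measurableSet_singleton k)
    rw [integrable_indicator_iff hmk]
    exact (integrableOn_const_iff).mpr (Or.inr (measure_lt_top _ _))

lemma cond_exp_ge1 {Ω : Type*} [MeasurableSpace Ω] {μ : Measure Ω} [IsProbabilityMeasure μ]
    {U V : Ω → ℕ}
    (hmU : Measurable U) (hmV : Measurable V) (hUV : IndepFun U V μ)
    {u v : ℝ} (hu : 0 < u) (hv : 0 < v)
    (hU : ∀ k, μ {ω | U ω = k} = ENNReal.ofReal (pmass u k))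
    (hV : ∀ k, μ {ω | V ω = k} = ENNReal.ofReal (pmass v k)) :
    ∫ ω, (U ω : ℝ) / ((U ω + V ω : ℕ) : ℝ) ∂(μ[|{ω | 1 ≤ U ω + V ω}]) = u / (u + v) := by
  classical
  set f : Ω → ℝ := fun ω => (U ω : ℝ) / ((U ω + V ω : ℕ) : ℝ) with hf_def
  set t : Set Ω := {ω | 1 ≤ U ω + V ω} with ht_def
  set S : ℕ → Set Ω := fun n => {ω | U ω + V ω = n} with hS_def
  have hmS : ∀ n, MeasurableSet (S n) := fun n => (hmU.add hmV) (measurableSet_singleton n)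
  have hmt : MeasurableSet t := by
    have : t = (fun ω => U ω + V ω) ⁻¹' (Set.Ici 1) := rfl
    rw [this]; exact (hmU.add hmV) measurableSet_Ici
  have hf_meas : Measurable f := by
    exact (measurable_from_top.comp hmU).div (measurable_from_top.comp (hmU.add hmV))
  have hf_bound : ∀ ω, ‖f ω‖ ≤ 1 := by
    intro ω
    rw [Real.norm_eq_abs, abs_of_nonneg (by positivity)]
    rcases Nat.eq_zero_or_pos (U ω + V ω) with h | h
    · have hU0 : U ω = 0 := by omega
      simp [hf_def, hU0, h]
    · rw [div_le_one (by exact_mod_cast h)]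
      exact_mod_cast Nat.le.intro rfl
  have hf_int : Integrable f μ :=
    Integrable.mono' (integrable_const 1) hf_meas.aestronglyMeasurable (ae_of_all _ hf_bound)
  have hμS : ∀ n, μ (S n) = ENNReal.ofReal (pmass (u+v) n) :=
    sum_mass hmU hmV hUV hu.le hv.le hU hV
  have hμS0 : ∀ n, μ (S n) ≠ 0 := by
    intro n
    rw [hμS n]
    simp only [ne_eq, ENNReal.ofReal_eq_zero, not_le]
    exact pmass_pos (by linarith) n
  have hSn_int : ∀ n : ℕ, ∫ ω in S (n+1), f ω ∂μ = (μ (S (n+1))).toReal * (u/(u+v)) := by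
    intro n
    have hcond := cond_exp_eq hmU hmV hUV hu hv hU hV (n+1) (by omega)
    have : μ[|S (n+1)] = (μ (S (n+1)))⁻¹ • μ.restrict (S (n+1)) := rfl
    rw [show ∫ ω, (U ω : ℝ) / ((U ω + V ω : ℕ) : ℝ) ∂(μ[|{ω | U ω + V ω = n+1}])
        = ∫ ω, f ω ∂(μ[|S (n+1)]) from rfl, this, integral_smul_measure] at hcond
    rw [ENNReal.toReal_inv, smul_eq_mul] at hcond
    have hne : (μ (S (n+1))).toReal ≠ 0 := by
      have := hμS0 (n+1)
      have hfin : μ (S (n+1)) ≠ ⊤ := measure_ne_top _ _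
      simp [ENNReal.toReal_eq_zero_iff, this, hfin]
    field_simp at hcond ⊢
    linarith [hcond]
  have ht_union : t = ⋃ n : ℕ, S (n+1) := by
    ext ω
    simp only [ht_def, hS_def, Set.mem_setOf_eq, Set.mem_iUnion]
    constructor
    · intro h; exact ⟨U ω + V ω - 1, by omega⟩
    · rintro ⟨n, hn⟩; omega
  have hdisj : Pairwise (Function.onFun Disjoint fun n => S (n+1)) := by
    intro i j hij
    simp only [Function.onFun, Set.disjoint_left, hS_def, Set.mem_setOf_eq]
    intro ω h1 h2
    omega
  have hint_t : ∫ ω in t, f ω ∂μ = (u/(u+v)) * (μ t).toReal := by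
    rw [ht_union, integral_iUnion (fun n => hmS (n+1)) hdisj (hf_int.integrableOn)]
    have : ∀ n : ℕ, ∫ ω in S (n+1), f ω ∂μ = (u/(u+v)) * (μ (S (n+1))).toReal := by
      intro n; rw [hSn_int n]; ring
    rw [tsum_congr this, tsum_mul_left]
    congr 1
    rw [measure_iUnion hdisj (fun n => hmS (n+1))]
    rw [ENNReal.tsum_toReal_eq (fun n => measure_ne_top _ _)]
  have hcond_eq : μ[|t] = (μ t)⁻¹ • μ.restrict t := rfl
  rw [show ∫ ω, (U ω : ℝ) / ((U ω + V ω : ℕ) : ℝ) ∂(μ[|{ω | 1 ≤ U ω + V ω}])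
      = ∫ ω, f ω ∂(μ[|t]) from rfl, hcond_eq, integral_smul_measure, ENNReal.toReal_inv,
    smul_eq_mul, hint_t]
  have hμt0 : (μ t).toReal ≠ 0 := by
    have h1 : μ (S 1) ≤ μ t := by
      apply measure_mono
      intro ω h
      simp only [hS_def, Set.mem_setOf_eq] at h
      simp only [ht_def, Set.mem_setOf_eq]
      omega
    have : μ t ≠ 0 := fun h => hμS0 1 (le_antisymm (h ▸ h1) zero_le)
    simp [ENNReal.toReal_eq_zero_iff, this, measure_ne_top μ t]
  field_simp

lemma indep_sums {Ω : Type*} {ι : Type*} [MeasurableSpace Ω] {μ : Measure Ω} (g : ι → Ω → ℕ)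
    (h : iIndepFun g μ) (hm : ∀ i, Measurable (g i))
    (S T : Finset ι) (hST : Disjoint S T) :
    IndepFun (fun a => ∑ i ∈ S, g i a) (fun a => ∑ i ∈ T, g i a) μ := by
  classical
  have h_left : (fun a => ∑ i ∈ S, g i a)
      = (fun p : S → ℕ => ∑ j, p j) ∘ fun a (j : S) => g j a := by
    ext a; simp only [Function.comp_apply]; rw [← Finset.sum_coe_sort]
  have h_right : (fun a => ∑ i ∈ T, g i a)
      = (fun p : T → ℕ => ∑ j, p j) ∘ fun a (j : T) => g j a := by
    ext a; simp only [Function.comp_apply]; rw [← Finset.sum_coe_sort]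
  rw [h_left, h_right]
  exact (h.indepFun_finset S T hST hm).comp
    (Finset.univ.measurable_sum fun j _ => measurable_pi_apply j)
    (Finset.univ.measurable_sum fun j _ => measurable_pi_apply j)

lemma sum_family_mass {Ω : Type*} [MeasurableSpace Ω] {μ : Measure Ω} [IsProbabilityMeasure μ]
    (Z : ℕ → Ω → ℕ) (hmZ : ∀ m, Measurable (Z m))
    (hind : ∀ j : ℕ, IndepFun (fun ω => ∑ m ∈ range j, Z m ω) (Z j) μ)
    {r : ℝ} (hr : 0 ≤ r)
    (hZ : ∀ m k, μ {ω | Z m ω = k} = ENNReal.ofReal (pmass r k)) (M : ℕ) (k : ℕ) :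
    μ {ω | (∑ m ∈ range M, Z m ω) = k} = ENNReal.ofReal (pmass ((M : ℝ) * r) k) := by
  induction M generalizing k with
  | zero =>
    simp only [range_zero, sum_empty, Nat.cast_zero, zero_mul]
    cases k with
    | zero => simp [pmass]
    | succ k =>
      rw [show {ω : Ω | (0:ℕ) = k+1} = ∅ by ext ω; simp]
      simp [pmass]
  | succ j ih =>
    have hmsum : Measurable (fun ω => ∑ m ∈ range j, Z m ω) :=
      Finset.measurable_sum _ (fun i _ => hmZ i)
    have := sum_mass hmsum (hmZ j) (hind j) (by positivity) hr ih (hZ j) k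
    have hset : {ω | (∑ m ∈ range (j+1), Z m ω) = k}
        = {ω | (∑ m ∈ range j, Z m ω) + Z j ω = k} := by
      ext ω; simp [Finset.sum_range_succ]
    rw [hset, this]
    congr 2
    push_cast
    ring


/-- if `A ~ Poisson(a)` and `B ~ Poisson(b)` are independent, then the
conditional distribution of `A` given `A + B = n` is `Binomial(n, a/(a+b))`;
consequently, in the Capture–Recapture model, with `S_Y = Σ_m Y_m`, `S₂ = Σ_m X_{m,2}`,
`S₁ = Σ_m X_{m,1}`, one has `E[S_Y/(S_Y+S₂) | S_Y+S₂ = n] = p₁` for every `n ≥ 1`,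
`E[p̂₁,CR | S_Y+S₂ ≥ 1] = p₁`, and symmetrically `E[p̂₂,CR | S_Y+S₁ ≥ 1] = p₂`. -/
theorem poisson_conditional_binomial_and_CR_unbiased
    {Ω : Type*} [MeasurableSpace Ω] (μ : Measure Ω) [IsProbabilityMeasure μ]
    -- the two independent Poisson variables
    (a b : ℝ) (ha : 0 < a) (hb : 0 < b)
    (A B : Ω → ℕ) (hmA : Measurable A) (hmB : Measurable B)
    (hAB : IndepFun A B μ)
    (hA : μ.map A = poissonMeasure a.toNNReal)
    (hB : μ.map B = poissonMeasure b.toNNReal)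
    -- the Capture–Recapture model
    (lam p1 p2 : ℝ) (hlam : 0 < lam)
    (hp1 : p1 ∈ Set.Ioo (0 : ℝ) 1) (hp2 : p2 ∈ Set.Ioo (0 : ℝ) 1)
    (M : ℕ) (hM : 2 ≤ M)
    (X1 X2 Y : ℕ → Ω → ℕ)
    (hmX1 : ∀ m, Measurable (X1 m)) (hmX2 : ∀ m, Measurable (X2 m))
    (hmY : ∀ m, Measurable (Y m))
    (hindep : iIndepFun
      (fun (q : ℕ × Fin 3) => ![X1 q.1, X2 q.1, Y q.1] q.2) μ)
    (hX1 : ∀ m, μ.map (X1 m) = poissonMeasure (lam * p1 * (1 - p2)).toNNReal)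
    (hX2 : ∀ m, μ.map (X2 m) = poissonMeasure (lam * p2 * (1 - p1)).toNNReal)
    (hY : ∀ m, μ.map (Y m) = poissonMeasure (lam * p1 * p2).toNNReal) :
    -- conditional-binomial claim
    (∀ n k : ℕ, k ≤ n →
      μ[|{ω | A ω + B ω = n}] {ω | A ω = k} =
        ENNReal.ofReal ((Nat.choose n k : ℝ) * (a / (a + b)) ^ k *
          (1 - a / (a + b)) ^ (n - k))) ∧
    -- E[S_Y/(S_Y+S₂) | S_Y+S₂ = n] = p₁ for every n ≥ 1
    (∀ n : ℕ, 1 ≤ n →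
      (∫ ω, ((∑ m ∈ Finset.range M, Y m ω : ℕ) : ℝ) /
          (((∑ m ∈ Finset.range M, Y m ω) + (∑ m ∈ Finset.range M, X2 m ω) : ℕ) : ℝ)
        ∂(μ[|{ω | (∑ m ∈ Finset.range M, Y m ω) + (∑ m ∈ Finset.range M, X2 m ω) = n}]))
        = p1) ∧
    -- E[p̂₁,CR | S_Y+S₂ ≥ 1] = p₁
    ((∫ ω, ((∑ m ∈ Finset.range M, Y m ω : ℕ) : ℝ) /
          (((∑ m ∈ Finset.range M, Y m ω) + (∑ m ∈ Finset.range M, X2 m ω) : ℕ) : ℝ)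
        ∂(μ[|{ω | 1 ≤ (∑ m ∈ Finset.range M, Y m ω) + (∑ m ∈ Finset.range M, X2 m ω)}]))
        = p1) ∧
    -- E[p̂₂,CR | S_Y+S₁ ≥ 1] = p₂
    ((∫ ω, ((∑ m ∈ Finset.range M, Y m ω : ℕ) : ℝ) /
          (((∑ m ∈ Finset.range M, Y m ω) + (∑ m ∈ Finset.range M, X1 m ω) : ℕ) : ℝ)
        ∂(μ[|{ω | 1 ≤ (∑ m ∈ Finset.range M, Y m ω) + (∑ m ∈ Finset.range M, X1 m ω)}]))
        = p2) := by
  classical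
  obtain ⟨hp1a, hp1b⟩ := hp1
  obtain ⟨hp2a, hp2b⟩ := hp2
  -- masses for A and B
  have hAmass : ∀ k, μ {ω | A ω = k} = ENNReal.ofReal (pmass a k) :=
    map_poisson_mass hmA ha.le hA
  have hBmass : ∀ k, μ {ω | B ω = k} = ENNReal.ofReal (pmass b k) :=
    map_poisson_mass hmB hb.le hB
  -- the family g
  set g : ℕ × Fin 3 → Ω → ℕ := fun q => ![X1 q.1, X2 q.1, Y q.1] q.2 with hg_def
  have hmg : ∀ q, Measurable (g q) := by
    rintro ⟨m, j⟩
    fin_cases j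
    · exact hmX1 m
    · exact hmX2 m
    · exact hmY m
  have hg0 : ∀ m, g (m, 0) = X1 m := fun m => rfl
  have hg1 : ∀ m, g (m, 1) = X2 m := fun m => rfl
  have hg2 : ∀ m, g (m, 2) = Y m := fun m => rfl
  have hsum_prod : ∀ (W : ℕ → Ω → ℕ) (c : Fin 3), (∀ m, g (m, c) = W m) →
      ∀ (s : Finset ℕ) (a : Ω), ∑ i ∈ s ×ˢ ({c} : Finset (Fin 3)), g i a = ∑ m ∈ s, W m a := by
    intro W c hc s a
    rw [Finset.sum_product]
    exact Finset.sum_congr rfl fun m _ => by rw [Finset.sum_singleton, hc m]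
  -- partial sum independence for a column c
  have hind_col : ∀ (W : ℕ → Ω → ℕ) (c : Fin 3), (∀ m, g (m, c) = W m) →
      ∀ j : ℕ, IndepFun (fun ω => ∑ m ∈ range j, W m ω) (W j) μ := by
    intro W c hc j
    have hd : Disjoint (range j ×ˢ ({c} : Finset (Fin 3))) ({(j, c)} : Finset (ℕ × Fin 3)) := by
      rw [Finset.disjoint_singleton_right, Finset.mem_product]
      simp
    have h := indep_sums g hindep hmg (range j ×ˢ ({c} : Finset (Fin 3))) {(j, c)} hd
    have e1 : (fun a : Ω => ∑ i ∈ range j ×ˢ ({c} : Finset (Fin 3)), g i a)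
        = fun ω => ∑ m ∈ range j, W m ω := by
      funext a; exact hsum_prod W c hc (range j) a
    have e2 : (fun a : Ω => ∑ i ∈ ({(j, c)} : Finset (ℕ × Fin 3)), g i a) = W j := by
      funext a; rw [Finset.sum_singleton, hc j]
    rwa [e1, e2] at h
  -- independence of the two column sums
  have hind_cols : ∀ (W W' : ℕ → Ω → ℕ) (c c' : Fin 3), c ≠ c' →
      (∀ m, g (m, c) = W m) → (∀ m, g (m, c') = W' m) →
      IndepFun (fun ω => ∑ m ∈ range M, W m ω) (fun ω => ∑ m ∈ range M, W' m ω) μ := by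
    intro W W' c c' hcc hc hc'
    have hd : Disjoint (range M ×ˢ ({c} : Finset (Fin 3))) (range M ×ˢ ({c'} : Finset (Fin 3))) := by
      rw [Finset.disjoint_left]
      rintro ⟨m, e⟩ h1 h2
      rw [Finset.mem_product] at h1 h2
      simp only [Finset.mem_singleton] at h1 h2
      exact hcc (h1.2 ▸ h2.2 ▸ rfl)
    have h := indep_sums g hindep hmg _ _ hd
    have e1 : (fun a : Ω => ∑ i ∈ range M ×ˢ ({c} : Finset (Fin 3)), g i a)
        = fun ω => ∑ m ∈ range M, W m ω := by
      funext a; exact hsum_prod W c hc (range M) a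
    have e2 : (fun a : Ω => ∑ i ∈ range M ×ˢ ({c'} : Finset (Fin 3)), g i a)
        = fun ω => ∑ m ∈ range M, W' m ω := by
      funext a; exact hsum_prod W' c' hc' (range M) a
    rwa [e1, e2] at h
  -- rates
  set rY : ℝ := lam * p1 * p2 with hrY
  set rX1 : ℝ := lam * p1 * (1 - p2) with hrX1
  set rX2 : ℝ := lam * p2 * (1 - p1) with hrX2
  have hrY0 : 0 < rY := by rw [hrY]; positivity
  have hrX10 : 0 < rX1 := by
    rw [hrX1]
    have h12 : 0 < 1 - p2 := by linarith
    positivity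
  have hrX20 : 0 < rX2 := by
    rw [hrX2]
    have h11 : 0 < 1 - p1 := by linarith
    positivity
  -- masses of the sums
  have hM0 : 0 < M := by omega
  have hMr : (0:ℝ) < (M:ℝ) := by exact_mod_cast hM0
  have hYm : ∀ m k, μ {ω | Y m ω = k} = ENNReal.ofReal (pmass rY k) :=
    fun m => map_poisson_mass (hmY m) hrY0.le (hY m)
  have hX1m : ∀ m k, μ {ω | X1 m ω = k} = ENNReal.ofReal (pmass rX1 k) :=
    fun m => map_poisson_mass (hmX1 m) hrX10.le (hX1 m)
  have hX2m : ∀ m k, μ {ω | X2 m ω = k} = ENNReal.ofReal (pmass rX2 k) :=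
    fun m => map_poisson_mass (hmX2 m) hrX20.le (hX2 m)
  have hSY : ∀ k, μ {ω | (∑ m ∈ range M, Y m ω) = k} = ENNReal.ofReal (pmass ((M:ℝ) * rY) k) :=
    sum_family_mass Y hmY (hind_col Y 2 hg2) hrY0.le hYm M
  have hSX1 : ∀ k, μ {ω | (∑ m ∈ range M, X1 m ω) = k} = ENNReal.ofReal (pmass ((M:ℝ) * rX1) k) :=
    sum_family_mass X1 hmX1 (hind_col X1 0 hg0) hrX10.le hX1m M
  have hSX2 : ∀ k, μ {ω | (∑ m ∈ range M, X2 m ω) = k} = ENNReal.ofReal (pmass ((M:ℝ) * rX2) k) :=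
    sum_family_mass X2 hmX2 (hind_col X2 1 hg1) hrX20.le hX2m M
  have hmSY : Measurable (fun ω => ∑ m ∈ range M, Y m ω) :=
    Finset.measurable_sum _ (fun i _ => hmY i)
  have hmSX1 : Measurable (fun ω => ∑ m ∈ range M, X1 m ω) :=
    Finset.measurable_sum _ (fun i _ => hmX1 i)
  have hmSX2 : Measurable (fun ω => ∑ m ∈ range M, X2 m ω) :=
    Finset.measurable_sum _ (fun i _ => hmX2 i)
  have hindY2 : IndepFun (fun ω => ∑ m ∈ range M, Y m ω) (fun ω => ∑ m ∈ range M, X2 m ω) μ :=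
    hind_cols Y X2 2 1 (by decide) hg2 hg1
  have hindY1 : IndepFun (fun ω => ∑ m ∈ range M, Y m ω) (fun ω => ∑ m ∈ range M, X1 m ω) μ :=
    hind_cols Y X1 2 0 (by decide) hg2 hg0
  have huY : (0:ℝ) < (M:ℝ) * rY := by positivity
  have huX1 : (0:ℝ) < (M:ℝ) * rX1 := by positivity
  have huX2 : (0:ℝ) < (M:ℝ) * rX2 := by positivity
  -- the two ratio computations
  have hratio2 : (M:ℝ) * rY / ((M:ℝ) * rY + (M:ℝ) * rX2) = p1 := by
    rw [hrY, hrX2]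
    have hden : (M:ℝ) * (lam * p1 * p2) + (M:ℝ) * (lam * p2 * (1 - p1)) = (M:ℝ) * lam * p2 := by
      ring
    rw [hden, div_eq_iff (by positivity)]
    ring
  have hratio1 : (M:ℝ) * rY / ((M:ℝ) * rY + (M:ℝ) * rX1) = p2 := by
    rw [hrY, hrX1]
    have hden : (M:ℝ) * (lam * p1 * p2) + (M:ℝ) * (lam * p1 * (1 - p2)) = (M:ℝ) * lam * p1 := by
      ring
    rw [hden, div_eq_iff (by positivity)]
    ring
  refine ⟨?_, ?_, ?_, ?_⟩
  · intro n k hk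
    exact cond_binom hmA hmB hAB ha hb hAmass hBmass n k hk
  · intro n hn
    have := cond_exp_eq hmSY hmSX2 hindY2 huY huX2 hSY hSX2 n hn
    rw [hratio2] at this
    exact this
  · have := cond_exp_ge1 hmSY hmSX2 hindY2 huY huX2 hSY hSX2
    rw [hratio2] at this
    exact this
  · have := cond_exp_ge1 hmSY hmSX1 hindY1 huY huX1 hSY hSX1
    rw [hratio1] at this
    exact this
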